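/- Let G be a GFP sequence of Fibonacci type. Then for every integer n ≥ 1, d · Σ_{j=1}^{n} g^{2(n−j)} · G(4j−3) = G(2n−1)·G(2n); equivalently, Σ_{j=1}^{n} g^{2(n−j)} G(4j−3) = G(2n−1)·G(2n)/d. -/

import Mathlib

open Polynomial Finset

theorem GFP_fib_type_closed_sum (d g : Polynomial ℤ) (hd : d ≠ 0) (hg : g ≠ 0)
    (G : ℕ → Polynomial ℤ) (h0 : G 0 = 0) (h1 : G 1 = 1)
    (hrec : ∀ n : ℕ, 2 ≤ n → G n = d * G (n - 1) + g * G (n - 2))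
    (n : ℕ) (hn : 1 ≤ n) :
    d * ∑ j ∈ Finset.Icc 1 n, g ^ (2 * (n - j)) * G (4 * j - 3) =
      G (2 * n - 1) * G (2 * n) := by
  have h2 : G 2 = d := by
    have := hrec 2 (by norm_num)
    simpa [h0, h1] using this
  -- addition formula
  have key : ∀ b a : ℕ, G (a + b + 1) = G (a + 1) * G (b + 1) + g * (G a * G b) := by
    intro b
    induction b using Nat.twoStepInduction with
    | zero => intro a; simp [h0, h1]
    | one =>
      intro a
      have hr := hrec (a + 2) (by omega)
      simp only [Nat.add_sub_cancel] at hr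
      have : a + 2 - 1 = a + 1 := by omega
      rw [this] at hr
      rw [show a + 1 + 1 = a + 2 from rfl, hr, h2, h1]
      ring
    | more b ih1 ih2 =>
      intro a
      have hr := hrec (a + (b + 2) + 1) (by omega)
      have e1 : a + (b + 2) + 1 - 1 = a + (b + 1) + 1 := by omega
      have e2 : a + (b + 2) + 1 - 2 = a + b + 1 := by omega
      rw [e1, e2, ih2, ih1] at hr
      have hrb := hrec (b + 2 + 1) (by omega)
      have f1 : b + 2 + 1 - 1 = b + 1 + 1 := by omega
      have f2 : b + 2 + 1 - 2 = b + 1 := by omega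
      rw [f1, f2] at hrb
      have hrb2 := hrec (b + 2) (by omega)
      simp only [Nat.add_sub_cancel, show b + 2 - 1 = b + 1 from by omega] at hrb2
      rw [hr, hrb, hrb2]
      ring
  induction n, hn using Nat.le_induction with
  | base =>
    simp [h1, h2]
  | succ n hn ih =>
    have hsplit : Finset.Icc 1 (n + 1) = insert (n + 1) (Finset.Icc 1 n) := by
      ext k; simp [Finset.mem_Icc]; omega
    rw [hsplit, Finset.sum_insert (by simp)]
    have hterm : (4 * (n + 1) - 3) = 2 * n + (2 * n) + 1 := by omega
    have hGsum : ∀ j ∈ Finset.Icc 1 n,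
        g ^ (2 * (n + 1 - j)) * G (4 * j - 3) = g ^ 2 * (g ^ (2 * (n - j)) * G (4 * j - 3)) := by
      intro j hj
      simp only [Finset.mem_Icc] at hj
      have : 2 * (n + 1 - j) = 2 + 2 * (n - j) := by omega
      rw [this, pow_add]
      ring
    rw [Finset.sum_congr rfl hGsum, ← Finset.mul_sum]
    have h4n : G (4 * (n + 1) - 3) = G (2 * n + 1) * G (2 * n + 1) + g * (G (2 * n) * G (2 * n)) := by
      rw [hterm]; exact key (2 * n) (2 * n)
    have hA := hrec (2 * n + 1) (by omega)
    have a1 : 2 * n + 1 - 1 = 2 * n := by omega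
    have a2 : 2 * n + 1 - 2 = 2 * n - 1 := by omega
    rw [a1, a2] at hA
    have hB := hrec (2 * n + 2) (by omega)
    have b1 : 2 * n + 2 - 1 = 2 * n + 1 := by omega
    have b2 : 2 * n + 2 - 2 = 2 * n := by omega
    rw [b1, b2] at hB
    have t1 : 2 * (n + 1) - 1 = 2 * n + 1 := by omega
    have t2 : 2 * (n + 1) = 2 * n + 2 := by omega
    have t3 : 2 * (n + 1 - (n + 1)) = 0 := by omega
    rw [t1, t2, t3, pow_zero, one_mul, h4n, hB]
    linear_combination g ^ 2 * ih - g * G (2 * n) * hA
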